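/- arXiv:2501.06969 — 2 statements merged into one kernel-verified Lean document; each statement's English description precedes it below -/
import Mathlib

section
/- Let Y = m̄(T) + η(S) + ε with E[ε | T, S] = 0, let 𝒮(t) denote the support of the conditional density p_{S|T}(·|t), and let K be a symmetric kernel supported on [-1,1] with ∫K = 1. Assume m̄ is C² with bounded derivatives and that the Lebesgue measure of the symmetric difference 𝒮(t+uh) △ 𝒮(t) tends to 0 as h → 0 for each u. Then the oracle IPW functional E[ Y·K((T−t)/h) / (h·p_{T|S}(T|S)) ] converges as h → 0 to m̄(t)·ρ(t) + ω(t), where ρ(t) = P(S ∈ 𝒮(t)) and ω(t) = E[η(S)·1{S ∈ 𝒮(t)}]. In particular, when ρ(t) < 1 or ω(t) ≠ E[η(S)], the IPW estimator of m(t) is inconsistent. -/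
open MeasureTheory Filter

noncomputable def indR {α : Type*} (A : Set α) (x : α) : ℝ :=
  Set.indicator A (fun _ => (1:ℝ)) x

lemma indR_nonneg {α : Type*} (A : Set α) (x : α) : 0 ≤ indR A x := by
  unfold indR; by_cases h : x ∈ A <;> simp [Set.indicator_apply, h]

lemma indR_le_one {α : Type*} (A : Set α) (x : α) : indR A x ≤ 1 := by
  unfold indR; by_cases h : x ∈ A <;> simp [Set.indicator_apply, h]

lemma abs_indR_sub_le {α : Type*} (A B : Set α) (x : α) :
    |indR A x - indR B x| ≤ indR (symmDiff A B) x := by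
  unfold indR
  by_cases hA : x ∈ A <;> by_cases hB : x ∈ B <;>
    simp [Set.indicator_apply, hA, hB, Set.mem_symmDiff]

lemma measurable_indR {α : Type*} [MeasurableSpace α] {A : Set α} (hA : MeasurableSet A) :
    Measurable (indR A) := by
  unfold indR; exact measurable_const.indicator hA

lemma vanish_setIntegral {α : Type*} [MeasurableSpace α] {μ : Measure α} {f : α → ℝ}
    (hf : Integrable f μ) {ι : Type*} {l : Filter ι} {A : ι → Set α}
    (hA : Tendsto (fun i => μ (A i)) l (nhds 0)) :
    Tendsto (fun i => ∫ x in A i, f x ∂μ) l (nhds 0) := by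
  rw [NormedAddCommGroup.tendsto_nhds_zero]
  intro ε hε
  obtain ⟨δ, hδ, hδ'⟩ := exists_pos_setLIntegral_lt_of_measure_lt
    (μ := μ) (f := fun x => (‖f x‖₊ : ENNReal)) hf.2.ne (ENNReal.ofReal_pos.mpr hε).ne'
  have hev : ∀ᶠ i in l, μ (A i) < δ := hA (Iio_mem_nhds hδ)
  filter_upwards [hev] with i hi
  calc ‖∫ x in A i, f x ∂μ‖ ≤ (∫⁻ x in A i, (‖f x‖₊ : ENNReal) ∂μ).toReal := by
        simpa only [ofReal_norm, enorm_eq_nnnorm] using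
          norm_integral_le_lintegral_norm (μ := μ.restrict (A i)) f
    _ < ε := ENNReal.toReal_lt_of_lt_ofReal (hδ' _ hi)

lemma integrable_weight_indR {α : Type*} [MeasurableSpace α] {μ : Measure α}
    {pS : α → ℝ} (hpS_meas : Measurable pS) (hpS_nonneg : ∀ s, 0 ≤ pS s)
    (pS_int : Integrable pS μ)
    {w : α → ℝ} (hw : Measurable w) {W : ℝ} (hW : ∀ s, |w s| ≤ W)
    {A : Set α} (hA : MeasurableSet A) :
    Integrable (fun s => w s * indR A s * pS s) μ := by
  apply Integrable.mono' (pS_int.const_mul W)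
    (((hw.mul (measurable_indR hA)).mul hpS_meas).aestronglyMeasurable)
  apply ae_of_all
  intro s
  have h1 : |indR A s| ≤ 1 := by
    rw [abs_of_nonneg (indR_nonneg A s)]; exact indR_le_one A s
  calc ‖w s * indR A s * pS s‖ = |w s| * |indR A s| * pS s := by
        rw [Real.norm_eq_abs, abs_mul, abs_mul, abs_of_nonneg (hpS_nonneg s)]
    _ ≤ W * 1 * pS s := by
        have hWnn : 0 ≤ W := (abs_nonneg _).trans (hW s)
        exact mul_le_mul (mul_le_mul (hW s) h1 (abs_nonneg _) hWnn) le_rfl (hpS_nonneg s)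
          (mul_nonneg hWnn zero_le_one)
    _ = W * pS s := by ring

lemma key_tendsto {α : Type*} [MeasurableSpace α] {μ : Measure α}
    {pS : α → ℝ} (hpS_meas : Measurable pS) (hpS_nonneg : ∀ s, 0 ≤ pS s)
    (pS_int : Integrable pS μ)
    {ι : Type*} {l : Filter ι} {A : ι → Set α} {B : Set α}
    (hAmeas : ∀ i, MeasurableSet (A i)) (hBmeas : MeasurableSet B)
    (hsd : Tendsto (fun i => μ (symmDiff (A i) B)) l (nhds 0))
    {w : α → ℝ} (hw : Measurable w) {W : ℝ} (hW : ∀ s, |w s| ≤ W) :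
    Tendsto (fun i => ∫ s, w s * indR (A i) s * pS s ∂μ) l
      (nhds (∫ s in B, w s * pS s ∂μ)) := by
  have target_eq : ∫ s in B, w s * pS s ∂μ = ∫ s, w s * indR B s * pS s ∂μ := by
    rw [← integral_indicator hBmeas]
    congr 1; funext s; unfold indR
    by_cases hs : s ∈ B <;> simp [Set.indicator_apply, hs]
  rw [target_eq, tendsto_iff_norm_sub_tendsto_zero]
  have hR : Tendsto (fun i => W * ∫ x in symmDiff (A i) B, pS x ∂μ) l (nhds 0) := by
    simpa using (vanish_setIntegral pS_int hsd).const_mul W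
  apply squeeze_zero (fun i => norm_nonneg _) _ hR
  intro i
  have hmsd : MeasurableSet (symmDiff (A i) B) := (hAmeas i).symmDiff hBmeas
  have hsub : (∫ s, w s * indR (A i) s * pS s ∂μ) - ∫ s, w s * indR B s * pS s ∂μ
      = ∫ s, w s * (indR (A i) s - indR B s) * pS s ∂μ := by
    rw [← integral_sub (integrable_weight_indR hpS_meas hpS_nonneg pS_int hw hW (hAmeas i))
      (integrable_weight_indR hpS_meas hpS_nonneg pS_int hw hW hBmeas)]
    congr 1; funext s; ring
  rw [hsub]
  calc ‖∫ s, w s * (indR (A i) s - indR B s) * pS s ∂μ‖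
      ≤ ∫ s, Set.indicator (symmDiff (A i) B) (fun s => W * pS s) s ∂μ := by
        apply norm_integral_le_of_norm_le ((pS_int.const_mul W).indicator hmsd)
        apply ae_of_all
        intro s
        have h1 : |indR (A i) s - indR B s| ≤ indR (symmDiff (A i) B) s :=
          abs_indR_sub_le _ _ _
        have h2 : Set.indicator (symmDiff (A i) B) (fun s => W * pS s) s
            = W * indR (symmDiff (A i) B) s * pS s := by
          unfold indR
          by_cases hs : s ∈ symmDiff (A i) B <;> simp [Set.indicator_apply, hs]
        rw [h2]
        calc ‖w s * (indR (A i) s - indR B s) * pS s‖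
            = |w s| * |indR (A i) s - indR B s| * pS s := by
              rw [Real.norm_eq_abs, abs_mul, abs_mul, abs_of_nonneg (hpS_nonneg s)]
          _ ≤ W * indR (symmDiff (A i) B) s * pS s := by
              have hWnn : 0 ≤ W := (abs_nonneg _).trans (hW s)
              exact mul_le_mul (mul_le_mul (hW s) h1 (abs_nonneg _) hWnn) le_rfl
                (hpS_nonneg s) (mul_nonneg hWnn (indR_nonneg _ _))
    _ = W * ∫ x in symmDiff (A i) B, pS x ∂μ := by
        rw [integral_indicator hmsd, integral_const_mul]


/-- Inconsistency of the IPW estimator without positivity.  Under the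
additive confounding model `Y = m₀(T) + η(S) + ε` (with `E[ε | T,S] = 0`, so that the
oracle IPW expectation is the double integral below against the joint density
`p(t₁,s) = p_{T|S}(t₁|s) p_S(s)`), with a symmetric kernel `K` supported on `[-1,1]`,
`m₀ ∈ C²` with bounded derivatives, bounded `η`, and conditional supports
`𝒮(t') = {s : p_{T|S}(t'|s) p_S(s) > 0}` whose symmetric differences
`𝒮(t+uh) ∆ 𝒮(t)` have Lebesgue measure tending to `0` as `h → 0⁺`, the oracle IPW
functional `E[Y K((T−t)/h)/(h p_{T|S}(T|S))]` converges as `h → 0⁺` to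
`m₀(t) ρ(t) + ω(t)` where `ρ(t) = P(S ∈ 𝒮(t)) = ∫_{𝒮(t)} p_S` and
`ω(t) = E[η(S) 1{S ∈ 𝒮(t)}]` — hence the IPW estimator of `m(t)` is inconsistent
whenever this limit differs from `m(t)`. -/
theorem ipw_inconsistency_without_positivity
    {d : ℕ}
    (m₀ : ℝ → ℝ) (η : (Fin d → ℝ) → ℝ)
    (pTS : ℝ → (Fin d → ℝ) → ℝ) (pS : (Fin d → ℝ) → ℝ)
    (K : ℝ → ℝ) (t : ℝ)
    (hK_meas : Measurable K) (hK_nonneg : ∀ u, 0 ≤ K u)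
    (hK_bdd : ∃ C, ∀ u, K u ≤ C)
    (hK_symm : ∀ u, K u = K (-u)) (hK_supp : ∀ u, 1 < |u| → K u = 0)
    (hK_int : ∫ u, K u = 1)
    (hm : ContDiff ℝ 2 m₀)
    (hm_bdd : ∃ M, ∀ x, |m₀ x| + |deriv m₀ x| + |iteratedDeriv 2 m₀ x| ≤ M)
    (hη_meas : Measurable η) (hη_bdd : ∃ M, ∀ s, |η s| ≤ M)
    (hpTS_meas : Measurable (Function.uncurry pTS)) (hpTS_nonneg : ∀ t' s, 0 ≤ pTS t' s)
    (hpS_meas : Measurable pS) (hpS_nonneg : ∀ s, 0 ≤ pS s)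
    (hpS_int : ∫ s, pS s = 1)
    (𝒮 : ℝ → Set (Fin d → ℝ))
    (h𝒮 : ∀ t', 𝒮 t' = {s | 0 < pTS t' s * pS s})
    (hsymmdiff : ∀ u : ℝ,
      Tendsto (fun h : ℝ => volume (symmDiff (𝒮 (t + u * h)) (𝒮 t)))
        (nhdsWithin 0 (Set.Ioi 0)) (nhds 0)) :
    Tendsto
      (fun h : ℝ =>
        ∫ s, ∫ t₁, (m₀ t₁ + η s) * K ((t₁ - t) / h) / (h * pTS t₁ s) * (pTS t₁ s * pS s))
      (nhdsWithin 0 (Set.Ioi 0))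
      (nhds (m₀ t * (∫ s in 𝒮 t, pS s) + ∫ s in 𝒮 t, η s * pS s)) := by
  classical
  obtain ⟨M₀, hM₀⟩ : ∃ M₀, ∀ x, |m₀ x| ≤ M₀ := by
    obtain ⟨M, hM⟩ := hm_bdd
    exact ⟨M, fun x => by
      have := hM x
      have h1 := abs_nonneg (deriv m₀ x)
      have h2 := abs_nonneg (iteratedDeriv 2 m₀ x)
      linarith⟩
  have hM₀nn : 0 ≤ M₀ := (abs_nonneg _).trans (hM₀ 0)
  obtain ⟨Mη, hMη⟩ := hη_bdd
  have hMηnn : 0 ≤ Mη := (abs_nonneg _).trans (hMη fun _ => 0)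
  obtain ⟨C, hC⟩ := hK_bdd
  have hCnn : 0 ≤ C := (hK_nonneg 0).trans (hC 0)
  have pS_int : Integrable pS := by
    by_contra hni
    rw [integral_undef hni] at hpS_int
    exact one_ne_zero hpS_int.symm
  have Smeas : ∀ t', MeasurableSet (𝒮 t') := by
    intro t'
    rw [h𝒮]
    exact measurableSet_lt measurable_const
      ((hpTS_meas.comp (measurable_prodMk_left)).mul hpS_meas)
  set l : Filter ℝ := nhdsWithin 0 (Set.Ioi 0) with hl
  set L : ℝ := m₀ t * (∫ s in 𝒮 t, pS s) + ∫ s in 𝒮 t, η s * pS s with hLdef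
  have habs : ∀ (c : ℝ) (s : Fin d → ℝ), |m₀ c + η s| ≤ M₀ + Mη := fun c s =>
    (abs_add_le _ _).trans (add_le_add (hM₀ c) (hMη s))
  -- pointwise norm bound for the integrand
  have normbd : ∀ (c : ℝ) (A : Set (Fin d → ℝ)) (s : Fin d → ℝ),
      ‖(m₀ c + η s) * indR A s * pS s‖ ≤ (M₀ + Mη) * pS s := by
    intro c A s
    have h1 : |indR A s| ≤ 1 := by
      rw [abs_of_nonneg (indR_nonneg A s)]; exact indR_le_one A s
    calc ‖(m₀ c + η s) * indR A s * pS s‖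
        = |m₀ c + η s| * |indR A s| * pS s := by
          rw [Real.norm_eq_abs, abs_mul, abs_mul, abs_of_nonneg (hpS_nonneg s)]
      _ ≤ (M₀ + Mη) * 1 * pS s :=
          mul_le_mul (mul_le_mul (habs c s) h1 (abs_nonneg _) (add_nonneg hM₀nn hMηnn))
            le_rfl (hpS_nonneg s) (mul_nonneg (add_nonneg hM₀nn hMηnn) zero_le_one)
      _ = (M₀ + Mη) * pS s := by ring
  -- integrability of the indicator bound in u
  have indicator_int : Integrable
      (Set.indicator (Set.Icc (-1:ℝ) 1) (fun _ => C * (M₀ + Mη))) := by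
    apply IntegrableOn.integrable_indicator _ measurableSet_Icc
    exact integrableOn_const measure_Icc_lt_top.ne
  -- Step 1: eventual equality with the transformed integral
  have step_eq : ∀ h : ℝ, h ∈ Set.Ioi (0:ℝ) →
      (∫ s, ∫ t₁, (m₀ t₁ + η s) * K ((t₁ - t) / h) / (h * pTS t₁ s) * (pTS t₁ s * pS s))
      = ∫ u, ∫ s, K u * ((m₀ (t + u * h) + η s) * indR (𝒮 (t + u * h)) s * pS s) := by
    intro h hh
    have hh' : (0:ℝ) < h := hh
    have hne : h ≠ 0 := ne_of_gt hh'
    have inner_eq : ∀ s : Fin d → ℝ,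
        (∫ t₁, (m₀ t₁ + η s) * K ((t₁ - t) / h) / (h * pTS t₁ s) * (pTS t₁ s * pS s))
        = ∫ u, K u * ((m₀ (t + u * h) + η s) * indR (𝒮 (t + u * h)) s * pS s) := by
      intro s
      set g : ℝ → ℝ := fun x =>
        K (x / h) * ((m₀ (t + x) + η s) * indR (𝒮 (t + x)) s * pS s) / h with hg
      have pt : ∀ t₁ : ℝ,
          (m₀ t₁ + η s) * K ((t₁ - t) / h) / (h * pTS t₁ s) * (pTS t₁ s * pS s)
          = g (t₁ - t) := by
        intro t₁
        have e1 : t + (t₁ - t) = t₁ := by ring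
        rw [hg]
        simp only []
        rw [e1]
        by_cases hp : pTS t₁ s = 0
        · have hmem : s ∉ 𝒮 t₁ := by rw [h𝒮]; simp [hp]
          have hind : indR (𝒮 t₁) s = 0 := by
            unfold indR; simp [Set.indicator_apply, hmem]
          rw [hp, hind]
          simp
        · have hppos : 0 < pTS t₁ s := lt_of_le_of_ne (hpTS_nonneg _ _) (Ne.symm hp)
          by_cases hps : pS s = 0
          · rw [hps]; simp
          · have hpspos : 0 < pS s := lt_of_le_of_ne (hpS_nonneg _) (Ne.symm hps)
            have hmem : s ∈ 𝒮 t₁ := by rw [h𝒮]; exact mul_pos hppos hpspos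
            have hind : indR (𝒮 t₁) s = 1 := by
              unfold indR; simp [Set.indicator_apply, hmem]
            rw [hind]
            field_simp
      have sub := MeasureTheory.Measure.integral_comp_mul_right g h
      rw [abs_of_pos (inv_pos.mpr hh'), smul_eq_mul] at sub
      have gud : ∀ u : ℝ, g (u * h)
          = (K u * ((m₀ (t + u * h) + η s) * indR (𝒮 (t + u * h)) s * pS s)) / h := by
        intro u
        rw [hg]
        simp only []
        rw [mul_div_cancel_right₀ _ hne]
      calc (∫ t₁, (m₀ t₁ + η s) * K ((t₁ - t) / h) / (h * pTS t₁ s) * (pTS t₁ s * pS s))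
          = ∫ t₁, g (t₁ - t) := integral_congr_ae (Filter.Eventually.of_forall pt)
        _ = ∫ x, g x := integral_sub_right_eq_self g t
        _ = h * ∫ u, g (u * h) := by rw [sub]; field_simp
        _ = h * ∫ u, (K u * ((m₀ (t + u * h) + η s) * indR (𝒮 (t + u * h)) s * pS s)) / h := by
            rw [integral_congr_ae (Filter.Eventually.of_forall gud)]
        _ = ∫ u, K u * ((m₀ (t + u * h) + η s) * indR (𝒮 (t + u * h)) s * pS s) := by
            rw [integral_div]
            field_simp
            congr 1; funext u; ring
    rw [integral_congr_ae (Filter.Eventually.of_forall inner_eq)]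
    -- Fubini
    have mset : MeasurableSet {p : (Fin d → ℝ) × ℝ | 0 < pTS (t + p.2 * h) p.1 * pS p.1} := by
      apply measurableSet_lt measurable_const
      exact ((hpTS_meas.comp ((measurable_const.add (measurable_snd.mul_const h)).prodMk
        measurable_fst)).mul (hpS_meas.comp measurable_fst))
    have mInd : Measurable fun p : (Fin d → ℝ) × ℝ => indR (𝒮 (t + p.2 * h)) p.1 := by
      have : (fun p : (Fin d → ℝ) × ℝ => indR (𝒮 (t + p.2 * h)) p.1)
          = Set.indicator {p : (Fin d → ℝ) × ℝ | 0 < pTS (t + p.2 * h) p.1 * pS p.1}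
            (fun _ => (1:ℝ)) := by
        funext p
        unfold indR
        simp [Set.indicator_apply, h𝒮]
      rw [this]
      exact measurable_const.indicator mset
    have mΦ : Measurable fun p : (Fin d → ℝ) × ℝ =>
        K p.2 * ((m₀ (t + p.2 * h) + η p.1) * indR (𝒮 (t + p.2 * h)) p.1 * pS p.1) :=
      (hK_meas.comp measurable_snd).mul
        ((((hm.continuous.measurable.comp
            (measurable_const.add (measurable_snd.mul_const h))).add
          (hη_meas.comp measurable_fst)).mul mInd).mul (hpS_meas.comp measurable_fst))
    have hint : Integrable (Function.uncurry fun (s : Fin d → ℝ) (u : ℝ) =>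
        K u * ((m₀ (t + u * h) + η s) * indR (𝒮 (t + u * h)) s * pS s))
        (volume.prod volume) := by
      apply Integrable.mono' (pS_int.mul_prod indicator_int)
        (mΦ.aestronglyMeasurable :)
      apply ae_of_all
      intro p
      by_cases hu : p.2 ∈ Set.Icc (-1:ℝ) 1
      · rw [Set.indicator_of_mem hu]
        calc ‖K p.2 * ((m₀ (t + p.2 * h) + η p.1) * indR (𝒮 (t + p.2 * h)) p.1 * pS p.1)‖
            = K p.2 * ‖(m₀ (t + p.2 * h) + η p.1) * indR (𝒮 (t + p.2 * h)) p.1 * pS p.1‖ := by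
              rw [norm_mul, Real.norm_eq_abs (K p.2), abs_of_nonneg (hK_nonneg _)]
          _ ≤ C * ((M₀ + Mη) * pS p.1) :=
              mul_le_mul (hC p.2) (normbd _ _ p.1) (norm_nonneg _) hCnn
          _ = pS p.1 * (C * (M₀ + Mη)) := by ring
      · have h1 : 1 < |p.2| := by
          rw [← not_le, abs_le]
          exact fun c => hu (Set.mem_Icc.mpr c)
        rw [Set.indicator_of_notMem hu, hK_supp _ h1]
        simp
    exact integral_integral_swap hint
  -- Step 2: convergence of the transformed integral
  have main : Tendsto
      (fun h : ℝ => ∫ u, ∫ s, K u * ((m₀ (t + u * h) + η s) * indR (𝒮 (t + u * h)) s * pS s))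
      l (nhds L) := by
    have main0 : Tendsto
        (fun h : ℝ => ∫ u, ∫ s, K u * ((m₀ (t + u * h) + η s) * indR (𝒮 (t + u * h)) s * pS s))
        l (nhds (∫ u, K u * L)) := by
      apply tendsto_integral_filter_of_dominated_convergence
        (Set.indicator (Set.Icc (-1:ℝ) 1) (fun _ => C * (M₀ + Mη)))
      · -- measurability
        apply Filter.Eventually.of_forall
        intro h
        have mset : MeasurableSet {q : ℝ × (Fin d → ℝ) | 0 < pTS (t + q.1 * h) q.2 * pS q.2} := by
          apply measurableSet_lt measurable_const
          exact ((hpTS_meas.comp ((measurable_const.add (measurable_fst.mul_const h)).prodMk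
            measurable_snd)).mul (hpS_meas.comp measurable_snd))
        have mInd : Measurable fun q : ℝ × (Fin d → ℝ) => indR (𝒮 (t + q.1 * h)) q.2 := by
          have : (fun q : ℝ × (Fin d → ℝ) => indR (𝒮 (t + q.1 * h)) q.2)
              = Set.indicator {q : ℝ × (Fin d → ℝ) | 0 < pTS (t + q.1 * h) q.2 * pS q.2}
                (fun _ => (1:ℝ)) := by
            funext q
            unfold indR
            simp [Set.indicator_apply, h𝒮]
          rw [this]
          exact measurable_const.indicator mset
        have mΨ : Measurable fun q : ℝ × (Fin d → ℝ) =>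
            K q.1 * ((m₀ (t + q.1 * h) + η q.2) * indR (𝒮 (t + q.1 * h)) q.2 * pS q.2) := by
          exact (hK_meas.comp measurable_fst).mul
            ((((hm.continuous.measurable.comp
                (measurable_const.add (measurable_fst.mul_const h))).add
              (hη_meas.comp measurable_snd)).mul mInd).mul (hpS_meas.comp measurable_snd))
        have mΨ' : StronglyMeasurable (Function.uncurry fun (u : ℝ) (s : Fin d → ℝ) =>
            K u * ((m₀ (t + u * h) + η s) * indR (𝒮 (t + u * h)) s * pS s)) :=
          mΨ.stronglyMeasurable
        exact mΨ'.integral_prod_right.aestronglyMeasurable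
      · -- bound
        apply Filter.Eventually.of_forall
        intro h
        apply ae_of_all
        intro u
        have step1 : ‖∫ s, K u * ((m₀ (t + u * h) + η s) * indR (𝒮 (t + u * h)) s * pS s)‖
            ≤ ∫ s, K u * ((M₀ + Mη) * pS s) := by
          apply norm_integral_le_of_norm_le ((pS_int.const_mul (M₀ + Mη)).const_mul (K u))
          apply ae_of_all
          intro s
          rw [norm_mul, Real.norm_eq_abs (K u), abs_of_nonneg (hK_nonneg u)]
          exact mul_le_mul_of_nonneg_left (normbd _ _ s) (hK_nonneg u)
        have step2 : (∫ s, K u * ((M₀ + Mη) * pS s)) = K u * (M₀ + Mη) := by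
          rw [integral_const_mul, integral_const_mul, hpS_int, mul_one]
        rw [step2] at step1
        refine step1.trans ?_
        by_cases hu : u ∈ Set.Icc (-1:ℝ) 1
        · rw [Set.indicator_of_mem hu]
          exact mul_le_mul_of_nonneg_right (hC u) (add_nonneg hM₀nn hMηnn)
        · have h1 : 1 < |u| := by
            rw [← not_le, abs_le]
            exact fun c => hu (Set.mem_Icc.mpr c)
          rw [Set.indicator_of_notMem hu, hK_supp u h1, zero_mul]
      · exact indicator_int
      · -- a.e. limit
        apply ae_of_all
        intro u
        have hone : ∀ s : Fin d → ℝ, |(1:ℝ)| ≤ (1:ℝ) := fun s => by simp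
        have hP := key_tendsto (μ := volume) hpS_meas hpS_nonneg pS_int
          (A := fun h : ℝ => 𝒮 (t + u * h)) (B := 𝒮 t) (fun h => Smeas _) (Smeas t)
          (hsymmdiff u) (w := fun _ => (1:ℝ)) measurable_const hone
        have hQ := key_tendsto (μ := volume) hpS_meas hpS_nonneg pS_int
          (A := fun h : ℝ => 𝒮 (t + u * h)) (B := 𝒮 t) (fun h => Smeas _) (Smeas t)
          (hsymmdiff u) (w := η) hη_meas hMη
        have hm0 : Tendsto (fun h : ℝ => m₀ (t + u * h)) l (nhds (m₀ t)) := by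
          have c : Continuous fun h : ℝ => t + u * h :=
            continuous_const.add (continuous_const.mul continuous_id)
          have h0 : Tendsto (fun h : ℝ => t + u * h) (nhds 0) (nhds t) := by
            have := c.tendsto 0
            simpa using this
          exact (hm.continuous.tendsto t).comp (h0.mono_left nhdsWithin_le_nhds)
        have comb : Tendsto (fun h : ℝ =>
            K u * (m₀ (t + u * h) * (∫ s, (1:ℝ) * indR (𝒮 (t + u * h)) s * pS s)
              + ∫ s, η s * indR (𝒮 (t + u * h)) s * pS s)) l
            (nhds (K u * (m₀ t * (∫ s in 𝒮 t, (1:ℝ) * pS s) + ∫ s in 𝒮 t, η s * pS s))) :=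
          ((hm0.mul hP).add hQ).const_mul (K u)
        have target_fix : (K u * (m₀ t * (∫ s in 𝒮 t, (1:ℝ) * pS s) + ∫ s in 𝒮 t, η s * pS s))
            = K u * L := by
          simp only [one_mul, hLdef]
        rw [target_fix] at comb
        apply comb.congr
        intro h
        have i1 : Integrable (fun s => (1:ℝ) * indR (𝒮 (t + u * h)) s * pS s) :=
          integrable_weight_indR hpS_meas hpS_nonneg pS_int measurable_const hone (Smeas _)
        have i2 : Integrable (fun s => η s * indR (𝒮 (t + u * h)) s * pS s) :=
          integrable_weight_indR hpS_meas hpS_nonneg pS_int hη_meas hMη (Smeas _)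
        rw [← integral_const_mul (m₀ (t + u * h)), ← integral_add (i1.const_mul _) i2,
          ← integral_const_mul (K u)]
        congr 1
        funext s
        ring
    have fin : (∫ u, K u * L) = L := by
      rw [integral_mul_const, hK_int, one_mul]
    rwa [fin] at main0
  refine main.congr' ?_
  filter_upwards [self_mem_nhdsWithin] with h hh
  exact (step_eq h hh).symm
end

section
/- Under the additive confounding model Y = m̄(T) + η(S) + ε with m̄ four times continuously differentiable with bounded derivatives, E[ε|T,S]=0, and the ζ-interior conditional density p_ζ(·|t) supported in 𝒮(t)⊖ζ ⊂ 𝒮(t+δ) for all |δ| ≤ h (with ∫ p_ζ(s|t) ds = 1), the bias-corrected IPW functional satisfies E[ Y·((T−t)/h)·K((T−t)/h)·p_ζ(S|t) / (h²·κ₂·p(T,S)) ] = m̄'(t) + (h²κ₄/(6κ₂))·m̄'''(t) + O(h³), where K is a symmetric second-order kernel supported on [-1,1], κ_j = ∫u^jK(u)du, and p(t,s) is the joint density of (T,S). -/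
open MeasureTheory

/-- Integrability of bounded measurable functions supported in [-1,1]. -/
lemma aux_integrable_of_bdd_supp (f : ℝ → ℝ) (hf : AEStronglyMeasurable f volume)
    (C : ℝ) (hbd : ∀ u, |f u| ≤ C) (hsupp : ∀ u, 1 < |u| → f u = 0) :
    Integrable f := by
  refine Integrable.mono' (g := (Set.Icc (-1:ℝ) 1).indicator fun _ => C) ?_ hf ?_
  · exact (integrable_indicator_iff measurableSet_Icc).2
      (integrableOn_const measure_Icc_lt_top.ne)
  · refine Filter.Eventually.of_forall fun u => ?_
    by_cases hu : u ∈ Set.Icc (-1:ℝ) 1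
    · simpa [Set.indicator_of_mem hu] using hbd u
    · have h1 : 1 < |u| := by
        by_contra h'
        exact hu (Set.mem_Icc.2 (abs_le.1 (not_lt.1 h')))
      simp [Set.indicator_of_notMem hu, hsupp u h1]

lemma aux_integrable_mul_kernel (K f : ℝ → ℝ) (hK_meas : Measurable K)
    (hK_nonneg : ∀ u, 0 ≤ K u) (CK : ℝ) (hCK : ∀ u, K u ≤ CK)
    (hK_supp : ∀ u, 1 < |u| → K u = 0) (hf : Continuous f)
    (B : ℝ) (hB : ∀ u, |u| ≤ 1 → |f u| ≤ B) :
    Integrable (fun u => f u * K u) := by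
  have hB0 : 0 ≤ B := le_trans (abs_nonneg _) (hB 0 (by norm_num))
  have hCK0 : 0 ≤ CK := le_trans (hK_nonneg 0) (hCK 0)
  refine aux_integrable_of_bdd_supp _ ((hf.measurable.mul hK_meas).aestronglyMeasurable)
    (B * CK) (fun u => ?_) (fun u hu => by simp [hK_supp u hu])
  by_cases hu : |u| ≤ 1
  · rw [abs_mul, abs_of_nonneg (hK_nonneg u)]
    exact mul_le_mul (hB u hu) (hCK u) (hK_nonneg u) hB0
  · simp [hK_supp u (not_le.1 hu), mul_nonneg hB0 hCK0]

lemma aux_odd_integral_zero (f : ℝ → ℝ) (hodd : ∀ u, f (-u) = - f u) :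
    ∫ u, f u = 0 := by
  have h := integral_neg_eq_self f volume
  simp only [hodd] at h
  rw [integral_neg] at h
  linarith

lemma aux_mvt_bound {ψ : ℝ → ℝ} {t C : ℝ} {k : ℕ}
    (hd : Differentiable ℝ ψ) (h0 : ψ t = 0)
    (hb : ∀ x, |deriv ψ x| ≤ C * |x - t| ^ k) :
    ∀ x, |ψ x| ≤ C * |x - t| ^ (k + 1) := by
  intro x
  have hC : 0 ≤ C := by
    have := hb (t + 1); simp at this
    exact le_trans (abs_nonneg _) this
  set s := Set.Icc (min t x) (max t x) with hs
  have hts : t ∈ s := ⟨min_le_left _ _, le_max_left _ _⟩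
  have hxs : x ∈ s := ⟨min_le_right _ _, le_max_right _ _⟩
  have key : ‖ψ x - ψ t‖ ≤ (C * |x - t| ^ k) * ‖x - t‖ := by
    apply Convex.norm_image_sub_le_of_norm_deriv_le (fun y _ => hd y)
      (fun y hy => ?_) (convex_Icc _ _) hts hxs
    refine le_trans (hb y) (mul_le_mul_of_nonneg_left (pow_le_pow_left₀ (abs_nonneg _) ?_ k) hC)
    rcases le_total t x with h | h
    · rw [abs_of_nonneg (by linarith [hy.1, min_eq_left h] : (0:ℝ) ≤ y - t),
        abs_of_nonneg (by linarith : (0:ℝ) ≤ x - t)]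
      have := hy.2; rw [max_eq_right h] at this; linarith
    · rw [abs_of_nonpos (by have := hy.2; rw [max_eq_left h] at this; linarith : y - t ≤ 0),
        abs_of_nonpos (by linarith : x - t ≤ 0)]
      have := hy.1; rw [min_eq_right h] at this; linarith
  simpa [h0, Real.norm_eq_abs, pow_succ, mul_assoc] using key

lemma aux_taylor_bound (m₀ : ℝ → ℝ) (t M : ℝ) (hm : ContDiff ℝ 4 m₀)
    (hM : ∀ x, ∀ i ≤ 4, |iteratedDeriv i m₀ x| ≤ M) :
    ∀ x, |m₀ x - m₀ t - deriv m₀ t * (x - t) - iteratedDeriv 2 m₀ t * (x - t)^2/2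
        - iteratedDeriv 3 m₀ t * (x - t)^3/6| ≤ M * |x - t|^4 := by
  have hd0 : Differentiable ℝ m₀ := hm.differentiable (by norm_num)
  have hd1 : Differentiable ℝ (deriv m₀) := by
    have := hm.differentiable_iteratedDeriv 1 (by norm_num)
    rwa [iteratedDeriv_one] at this
  have hd2 : Differentiable ℝ (iteratedDeriv 2 m₀) :=
    hm.differentiable_iteratedDeriv 2 (by norm_num)
  have hd3 : Differentiable ℝ (iteratedDeriv 3 m₀) :=
    hm.differentiable_iteratedDeriv 3 (by norm_num)
  have hD3 : ∀ x, HasDerivAt (iteratedDeriv 3 m₀) (iteratedDeriv 4 m₀ x) x := by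
    intro x
    have := (hd3 x).hasDerivAt
    have h4 : iteratedDeriv 4 m₀ x = deriv (iteratedDeriv 3 m₀) x := by
      rw [iteratedDeriv_succ]
    rwa [← h4] at this
  have hD2 : ∀ x, HasDerivAt (iteratedDeriv 2 m₀) (iteratedDeriv 3 m₀ x) x := by
    intro x
    have := (hd2 x).hasDerivAt
    have h3 : iteratedDeriv 3 m₀ x = deriv (iteratedDeriv 2 m₀) x := by
      rw [iteratedDeriv_succ]
    rwa [← h3] at this
  have hD1 : ∀ x, HasDerivAt (deriv m₀) (iteratedDeriv 2 m₀ x) x := by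
    intro x
    have := (hd1 x).hasDerivAt
    have h2 : iteratedDeriv 2 m₀ x = deriv (deriv m₀) x := by
      rw [iteratedDeriv_succ, iteratedDeriv_one]
    rwa [← h2] at this
  set c1 := deriv m₀ t
  set c2 := iteratedDeriv 2 m₀ t
  set c3 := iteratedDeriv 3 m₀ t
  have h3 : ∀ x, |iteratedDeriv 3 m₀ x - c3| ≤ M * |x - t| ^ 1 := by
    apply aux_mvt_bound (ψ := fun x => iteratedDeriv 3 m₀ x - c3)
      (hd3.sub_const _) (by simp [c3])
    intro x
    rw [((hD3 x).sub_const _).deriv]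
    simpa using hM x 4 le_rfl
  have hψ2 : ∀ x, HasDerivAt (fun x => iteratedDeriv 2 m₀ x - c2 - c3 * (x - t))
      (iteratedDeriv 3 m₀ x - c3) x := by
    intro x
    have hb : HasDerivAt (fun x => c3 * (x - t)) c3 x := by
      simpa using ((hasDerivAt_id x).sub_const t).const_mul c3
    exact ((hD2 x).sub_const _).sub hb
  have h2 : ∀ x, |iteratedDeriv 2 m₀ x - c2 - c3 * (x - t)| ≤ M * |x - t| ^ 2 := by
    apply aux_mvt_bound (fun x => (hψ2 x).differentiableAt) (by simp [c2])
    intro x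
    rw [(hψ2 x).deriv]
    exact h3 x
  have hψ1 : ∀ x, HasDerivAt (fun x => deriv m₀ x - c1 - c2 * (x - t) - c3 * (x - t)^2/2)
      (iteratedDeriv 2 m₀ x - c2 - c3 * (x - t)) x := by
    intro x
    have hb : HasDerivAt (fun x => c2 * (x - t)) c2 x := by
      simpa using ((hasDerivAt_id x).sub_const t).const_mul c2
    have hc : HasDerivAt (fun x => c3 * (x - t)^2/2) (c3 * (x - t)) x := by
      have := ((((hasDerivAt_id x).sub_const t).pow 2).const_mul c3).div_const 2
      refine this.congr_deriv ?_
      norm_num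
      ring
    exact (((hD1 x).sub_const _).sub hb).sub hc
  have h1 : ∀ x, |deriv m₀ x - c1 - c2 * (x - t) - c3 * (x - t)^2/2| ≤ M * |x - t| ^ 3 := by
    apply aux_mvt_bound (fun x => (hψ1 x).differentiableAt) (by simp [c1])
    intro x
    rw [(hψ1 x).deriv]
    exact h2 x
  have hψ0 : ∀ x, HasDerivAt
      (fun x => m₀ x - m₀ t - c1 * (x - t) - c2 * (x - t)^2/2 - c3 * (x - t)^3/6)
      (deriv m₀ x - c1 - c2 * (x - t) - c3 * (x - t)^2/2) x := by
    intro x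
    have hb : HasDerivAt (fun x => c1 * (x - t)) c1 x := by
      simpa using ((hasDerivAt_id x).sub_const t).const_mul c1
    have hc : HasDerivAt (fun x => c2 * (x - t)^2/2) (c2 * (x - t)) x := by
      have := ((((hasDerivAt_id x).sub_const t).pow 2).const_mul c2).div_const 2
      refine this.congr_deriv ?_
      norm_num
      ring
    have he : HasDerivAt (fun x => c3 * (x - t)^3/6) (c3 * (x - t)^2/2) x := by
      have := ((((hasDerivAt_id x).sub_const t).pow 3).const_mul c3).div_const 6
      refine this.congr_deriv ?_
      norm_num
      ring
    exact ((((hd0 x).hasDerivAt.sub_const _).sub hb).sub hc).sub he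
  have h0 : ∀ x, |m₀ x - m₀ t - c1 * (x - t) - c2 * (x - t)^2/2 - c3 * (x - t)^3/6|
      ≤ M * |x - t| ^ 4 := by
    apply aux_mvt_bound (fun x => (hψ0 x).differentiableAt) (by simp)
    intro x
    rw [(hψ0 x).deriv]
    exact h1 x
  exact h0

/-- Bias-corrected IPW expansion without positivity.  Under the additive
confounding model `Y = m₀(T) + η(S) + ε` with `m₀ ∈ C⁴` with bounded derivatives,
bounded `η`, `E[ε|T,S] = 0` (so the expectation of the modified IPW quantity equals the
double integral below against the joint density `p(t₁,s)`), a symmetric second-order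
kernel `K` supported on `[-1,1]`, and a `ζ`-interior conditional density `p_ζ(·|t)`
(a probability density whose support is contained in `𝒮(t+δ) = {s : p(t+δ,s) > 0}` for
all `|δ| ≤ h₀`), the bias-corrected IPW functional
`E[Y ((T−t)/h) K((T−t)/h) p_ζ(S|t)/(h² κ₂ p(T,S))]` equals
`m₀'(t) + (h² κ₄/(6κ₂)) m₀'''(t) + O(h³)` for all bandwidths `0 < h ≤ h₀`. -/
theorem bias_corrected_ipw_expansion
    {d : ℕ}
    (m₀ : ℝ → ℝ) (η : (Fin d → ℝ) → ℝ)
    (p : ℝ → (Fin d → ℝ) → ℝ)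
    (pζ : (Fin d → ℝ) → ℝ)
    (K : ℝ → ℝ) (t h₀ : ℝ) (hh₀ : 0 < h₀)
    (hK_meas : Measurable K) (hK_nonneg : ∀ u, 0 ≤ K u)
    (hK_bdd : ∃ C, ∀ u, K u ≤ C)
    (hK_symm : ∀ u, K u = K (-u)) (hK_supp : ∀ u, 1 < |u| → K u = 0)
    (hK_int : ∫ u, K u = 1)
    (hκ₂ : 0 < ∫ u, u ^ 2 * K u)
    (hm : ContDiff ℝ 4 m₀)
    (hm_bdd : ∃ M, ∀ x, ∀ i ≤ 4, |iteratedDeriv i m₀ x| ≤ M)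
    (hη_meas : Measurable η) (hη_bdd : ∃ M, ∀ s, |η s| ≤ M)
    (hp_meas : Measurable (Function.uncurry p)) (hp_nonneg : ∀ t' s, 0 ≤ p t' s)
    (hpζ_meas : Measurable pζ) (hpζ_nonneg : ∀ s, 0 ≤ pζ s)
    (hpζ_int : ∫ s, pζ s = 1)
    (hpζ_supp : ∀ δ : ℝ, |δ| ≤ h₀ → ∀ s, pζ s ≠ 0 → 0 < p (t + δ) s) :
    ∃ C : ℝ, ∀ h : ℝ, 0 < h → h ≤ h₀ →
      |(∫ s, ∫ t₁, (m₀ t₁ + η s) * ((t₁ - t) / h) * K ((t₁ - t) / h) * pζ s /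
            (h ^ 2 * (∫ u, u ^ 2 * K u) * p t₁ s) * p t₁ s) -
          (deriv m₀ t +
            h ^ 2 * (∫ u, u ^ 4 * K u) / (6 * ∫ u, u ^ 2 * K u) * iteratedDeriv 3 m₀ t)| ≤
        C * h ^ 3 := by
  obtain ⟨M, hM⟩ := hm_bdd
  obtain ⟨CK, hCK⟩ := hK_bdd
  set κ₂ := ∫ u, u ^ 2 * K u with hκ₂def
  set κ₄ := ∫ u, u ^ 4 * K u with hκ₄def
  have hM0 : 0 ≤ M := le_trans (abs_nonneg _) (hM t 0 (by norm_num))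
  have hm0_bdd : ∀ x, |m₀ x| ≤ M := by
    intro x; have := hM x 0 (by norm_num); rwa [iteratedDeriv_zero] at this
  have hκ₄0 : 0 ≤ κ₄ := by
    rw [hκ₄def]
    exact integral_nonneg fun u => mul_nonneg (by positivity) (hK_nonneg u)
  have hmc : Continuous m₀ := hm.continuous
  have int_pow : ∀ i : ℕ, Integrable (fun u : ℝ => u ^ i * K u) := by
    intro i
    apply aux_integrable_mul_kernel K _ hK_meas hK_nonneg CK hCK hK_supp (continuous_pow i) 1
    intro u hu
    calc |u ^ i| = |u| ^ i := abs_pow u i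
    _ ≤ 1 := pow_le_one₀ (abs_nonneg _) hu
  have I1 : ∫ u : ℝ, u ^ 1 * K u = 0 := by
    apply aux_odd_integral_zero
    intro u
    rw [← hK_symm u]
    ring
  have I3 : ∫ u : ℝ, u ^ 3 * K u = 0 := by
    apply aux_odd_integral_zero
    intro u
    rw [← hK_symm u]
    ring
  have hpζ_integrable : Integrable pζ := by
    by_contra hcon
    rw [integral_undef hcon] at hpζ_int
    norm_num at hpζ_int
  set c1 := deriv m₀ t with hc1def
  set c2 := iteratedDeriv 2 m₀ t with hc2def
  set c3 := iteratedDeriv 3 m₀ t with hc3def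
  set ψ : ℝ → ℝ := fun x => m₀ x - m₀ t - c1 * (x - t) - c2 * (x - t)^2/2 - c3 * (x - t)^3/6
    with hψdef
  have hψbound : ∀ x, |ψ x| ≤ M * |x - t| ^ 4 := by
    intro x
    simp only [hψdef]
    exact aux_taylor_bound m₀ t M hm hM x
  have hψc : Continuous ψ := by
    rw [hψdef]
    exact ((((hmc.sub continuous_const).sub
      (continuous_const.mul (continuous_id.sub continuous_const))).sub
      ((continuous_const.mul ((continuous_id.sub continuous_const).pow 2)).div_const 2)).sub
      ((continuous_const.mul ((continuous_id.sub continuous_const).pow 3)).div_const 6))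
  refine ⟨M * κ₄ / κ₂, ?_⟩
  intro h hh hhle
  have hne : h ≠ 0 := hh.ne'
  have hκ₂ne : κ₂ ≠ 0 := hκ₂.ne'
  -- integrability of the two h-dependent integrands
  have haff : Continuous (fun u : ℝ => t + h * u) :=
    continuous_const.add (continuous_const.mul continuous_id)
  have intm : Integrable (fun u => m₀ (t + h * u) * u * K u) := by
    apply aux_integrable_mul_kernel K (fun u => m₀ (t + h * u) * u) hK_meas hK_nonneg CK hCK
      hK_supp ((hmc.comp haff).mul continuous_id) M
    intro u hu
    rw [abs_mul]
    have := mul_le_mul (hm0_bdd (t + h * u)) hu (abs_nonneg _) hM0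
    simpa using this
  have intψ : Integrable (fun u => ψ (t + h * u) * u * K u) := by
    apply aux_integrable_mul_kernel K (fun u => ψ (t + h * u) * u) hK_meas hK_nonneg CK hCK
      hK_supp ((hψc.comp haff).mul continuous_id) (M * h₀ ^ 4)
    intro u hu
    rw [abs_mul]
    have h1 : |ψ (t + h * u)| ≤ M * h₀ ^ 4 := by
      have hb := hψbound (t + h * u)
      have harg : t + h * u - t = h * u := by ring
      rw [harg] at hb
      refine le_trans hb (mul_le_mul_of_nonneg_left ?_ hM0)
      have habs : |h * u| ≤ h₀ := by
        rw [abs_mul, abs_of_pos hh]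
        nlinarith [abs_nonneg u]
      exact pow_le_pow_left₀ (abs_nonneg _) habs 4
    have := mul_le_mul h1 hu (abs_nonneg _) (mul_nonneg hM0 (by positivity))
    simpa using this
  -- the key one-dimensional integral
  have hJ : (∫ u, m₀ (t + h * u) * u * K u)
      = (∫ u, ψ (t + h * u) * u * K u) + c1 * h * κ₂ + c3 * h ^ 3 / 6 * κ₄ := by
    have hsplit : (fun u => m₀ (t + h * u) * u * K u) = fun u =>
        ψ (t + h * u) * u * K u + m₀ t * (u ^ 1 * K u) + (c1 * h) * (u ^ 2 * K u)
          + (c2 * h ^ 2 / 2) * (u ^ 3 * K u) + (c3 * h ^ 3 / 6) * (u ^ 4 * K u) := by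
      funext u
      simp only [hψdef]
      ring
    have ia1 : Integrable (fun u : ℝ => m₀ t * (u ^ 1 * K u)) := (int_pow 1).const_mul (m₀ t)
    have ia2 : Integrable (fun u : ℝ => (c1 * h) * (u ^ 2 * K u)) :=
      (int_pow 2).const_mul (c1 * h)
    have ia3 : Integrable (fun u : ℝ => (c2 * h ^ 2 / 2) * (u ^ 3 * K u)) :=
      (int_pow 3).const_mul (c2 * h ^ 2 / 2)
    have ia4 : Integrable (fun u : ℝ => (c3 * h ^ 3 / 6) * (u ^ 4 * K u)) :=
      (int_pow 4).const_mul (c3 * h ^ 3 / 6)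
    have ib1 : Integrable (fun u : ℝ => ψ (t + h * u) * u * K u + m₀ t * (u ^ 1 * K u)) :=
      intψ.add ia1
    have ib2 : Integrable (fun u : ℝ => ψ (t + h * u) * u * K u + m₀ t * (u ^ 1 * K u)
        + (c1 * h) * (u ^ 2 * K u)) := ib1.add ia2
    have ib3 : Integrable (fun u : ℝ => ψ (t + h * u) * u * K u + m₀ t * (u ^ 1 * K u)
        + (c1 * h) * (u ^ 2 * K u) + (c2 * h ^ 2 / 2) * (u ^ 3 * K u)) := ib2.add ia3
    rw [hsplit,
      integral_add ib3 ia4,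
      integral_add ib2 ia3,
      integral_add ib1 ia2,
      integral_add intψ ia1,
      integral_const_mul, integral_const_mul, integral_const_mul, integral_const_mul,
      I1, I3, ← hκ₂def, ← hκ₄def]
    ring
  -- remainder bound
  have hEbound : |∫ u, ψ (t + h * u) * u * K u| ≤ M * h ^ 4 * κ₄ := by
    have hle : ∀ u : ℝ, |ψ (t + h * u) * u * K u| ≤ M * h ^ 4 * (u ^ 4 * K u) := by
      intro u
      by_cases hu : |u| ≤ 1
      · rw [abs_mul, abs_mul, abs_of_nonneg (hK_nonneg u)]
        have h1 : |ψ (t + h * u)| ≤ M * h ^ 4 * u ^ 4 := by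
          have hb := hψbound (t + h * u)
          have harg : t + h * u - t = h * u := by ring
          rw [harg] at hb
          refine le_trans hb (le_of_eq ?_)
          rw [abs_mul, mul_pow, abs_of_pos hh, Even.pow_abs (by decide)]
          ring
        calc |ψ (t + h * u)| * |u| * K u ≤ (M * h ^ 4 * u ^ 4) * 1 * K u := by
              apply mul_le_mul_of_nonneg_right _ (hK_nonneg u)
              exact mul_le_mul h1 hu (abs_nonneg _)
                (mul_nonneg (mul_nonneg hM0 (by positivity)) (by positivity))
        _ = M * h ^ 4 * (u ^ 4 * K u) := by ring
      · have hKu : K u = 0 := hK_supp u (not_le.1 hu)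
        simp [hKu]
    calc |∫ u, ψ (t + h * u) * u * K u| ≤ ∫ u, M * h ^ 4 * (u ^ 4 * K u) := by
          rw [← Real.norm_eq_abs]
          apply norm_integral_le_of_norm_le ((int_pow 4).const_mul (M * h ^ 4))
          exact Filter.Eventually.of_forall fun u => by
            simpa only [Real.norm_eq_abs] using hle u
    _ = M * h ^ 4 * κ₄ := by rw [integral_const_mul, ← hκ₄def]
  -- inner integral identity
  have hinner : ∀ s, (∫ t₁, (m₀ t₁ + η s) * ((t₁ - t) / h) * K ((t₁ - t) / h) * pζ s /
        (h ^ 2 * κ₂ * p t₁ s) * p t₁ s)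
      = pζ s * ((∫ u, m₀ (t + h * u) * u * K u) / (h * κ₂)) := by
    intro s
    have step1 : ∀ t₁ : ℝ, (m₀ t₁ + η s) * ((t₁ - t) / h) * K ((t₁ - t) / h) * pζ s /
          (h ^ 2 * κ₂ * p t₁ s) * p t₁ s
        = (fun u => (m₀ (t + h * u) + η s) * u * K u) ((t₁ - t) / h) * (pζ s / (h ^ 2 * κ₂)) := by
      intro t₁
      have harg : t + h * ((t₁ - t) / h) = t₁ := by field_simp; ring
      simp only [harg]
      by_cases hz : pζ s = 0
      · simp [hz]
      by_cases hKz : K ((t₁ - t) / h) = 0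
      · simp [hKz]
      have habs : |(t₁ - t) / h| ≤ 1 := not_lt.1 fun hgt => hKz (hK_supp _ hgt)
      have habs2 : |t₁ - t| ≤ h₀ := by
        rw [abs_div, abs_of_pos hh, div_le_one hh] at habs
        linarith
      have hp : 0 < p t₁ s := by
        have hps := hpζ_supp (t₁ - t) habs2 s hz
        have : t + (t₁ - t) = t₁ := by ring
        rwa [this] at hps
      field_simp
    rw [integral_congr_ae (Filter.Eventually.of_forall step1), integral_mul_const]
    have hsub : (∫ t₁ : ℝ, (fun u => (m₀ (t + h * u) + η s) * u * K u) ((t₁ - t) / h))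
        = ∫ x : ℝ, (fun u => (m₀ (t + h * u) + η s) * u * K u) (x / h) := by
      simpa using integral_sub_right_eq_self
        (fun x : ℝ => (fun u => (m₀ (t + h * u) + η s) * u * K u) (x / h)) t
    rw [hsub, Measure.integral_comp_div (fun u => (m₀ (t + h * u) + η s) * u * K u) h,
      abs_of_pos hh, smul_eq_mul]
    have hsplit2 : (fun u => (m₀ (t + h * u) + η s) * u * K u)
        = fun u => m₀ (t + h * u) * u * K u + η s * (u ^ 1 * K u) := by
      funext u
      ring
    rw [hsplit2, integral_add intm ((int_pow 1).const_mul (η s)), integral_const_mul, I1,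
      mul_zero, add_zero]
    field_simp
  rw [integral_congr_ae (Filter.Eventually.of_forall hinner), integral_mul_const, hpζ_int,
    one_mul, hJ]
  have hkey : ((∫ u, ψ (t + h * u) * u * K u) + c1 * h * κ₂ + c3 * h ^ 3 / 6 * κ₄) / (h * κ₂)
      - (c1 + h ^ 2 * κ₄ / (6 * κ₂) * c3)
      = (∫ u, ψ (t + h * u) * u * K u) / (h * κ₂) := by
    field_simp
    ring
  rw [hkey, abs_div, abs_of_pos (mul_pos hh hκ₂)]
  have heq : M * h ^ 4 * κ₄ / (h * κ₂) = M * κ₄ / κ₂ * h ^ 3 := by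
    field_simp
  calc |∫ u, ψ (t + h * u) * u * K u| / (h * κ₂) ≤ (M * h ^ 4 * κ₄) / (h * κ₂) := by
        gcongr
  _ = M * κ₄ / κ₂ * h ^ 3 := heq
end
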